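/- Let 𝐏⃗ be a finite collection of multi-tiles of rank 1, let f₁,…,fₙ be functions, and let T ⊆ 𝐏⃗ be a tree with top P⃗_T. Then Σ_{P⃗∈T} |I_{P⃗}| ∏_{i=1}^{n} ‖fᵢ‖_{P_i} ≤ C·|I_T| · sup_{1≤i₁<i₂≤n} [ size_{i₁}(T) · size_{i₂}(T) · ∏_{i≠i₁,i₂} ‖fᵢ‖_{T,i} ], with C depending only on n and the fixed tile constants. -/

import Mathlib

open MeasureTheory Real Complex
open scoped FourierTransform ENNReal NNReal Classical
noncomputable section

structure Iv where
  l : ℝ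
  len : ℝ

def Iv.set (I : Iv) : Set ℝ := Set.Ioo I.l (I.l + I.len)

def Iv.dil (c : ℝ) (I : Iv) : Set ℝ :=
  Set.Ioo (I.l + I.len / 2 - c * I.len / 2) (I.l + I.len / 2 + c * I.len / 2)

def Iv.chi (I : Iv) (x : ℝ) : ℝ := (1 + Metric.infDist x I.set / I.len)⁻¹

structure Tile where
  j : ℤ
  kt : ℤ
  kf : ℤ

def Tile.timeIv (P : Tile) : Iv := ⟨(2:ℝ)^P.j * P.kt, (2:ℝ)^P.j⟩

def Tile.freqIv (β : ℝ) (P : Tile) : Iv :=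
  ⟨(2:ℝ)^(-P.j) * ((P.kf : ℝ) + (-1:ℝ)^(-P.j) * β), (2:ℝ)^(-P.j)⟩

def Tile.lt' (β : ℝ) (P' P : Tile) : Prop :=
  (P'.timeIv).set ⊂ (P.timeIv).set ∧ (P.freqIv β).set ⊆ (P'.freqIv β).dil 3

def Tile.le' (β : ℝ) (P' P : Tile) : Prop := Tile.lt' β P' P ∨ P' = P

def Tile.lesim (β c : ℝ) (P' P : Tile) : Prop :=
  (P'.timeIv).set ⊆ (P.timeIv).set ∧ (P.freqIv β).set ⊆ (P'.freqIv β).dil c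

def Tile.lesim' (β c : ℝ) (P' P : Tile) : Prop :=
  Tile.lesim β c P' P ∧ ¬ Tile.le' β P' P

structure MultiTile (n : ℕ) where
  j : ℤ
  kt : ℤ
  kf : Fin n → ℤ

def MultiTile.tile {n : ℕ} (P : MultiTile n) (i : Fin n) : Tile := ⟨P.j, P.kt, P.kf i⟩

def MultiTile.timeIv {n : ℕ} (P : MultiTile n) : Iv := ⟨(2:ℝ)^P.j * P.kt, (2:ℝ)^P.j⟩

def MultiTile.freqCube {n : ℕ} (α : Fin n → ℝ) (P : MultiTile n) : Set (Fin n → ℝ) :=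
  {ξ | ∀ i, ξ i ∈ ((P.tile i).freqIv (α i)).set}

def HasRank (n k : ℕ) (α : Fin n → ℝ) (c₃ csmall : ℝ) (Ps : Finset (MultiTile n)) : Prop :=
  ∀ P ∈ Ps, ∀ P' ∈ Ps, ∀ ι : Fin k → Fin n, StrictMono ι →
    (∀ s, Tile.le' (α (ι s)) (MultiTile.tile P' (ι s)) (MultiTile.tile P (ι s))) →
    (∀ i, Tile.lesim (α i) c₃ (MultiTile.tile P' i) (MultiTile.tile P i)) ∧
    ((2:ℝ)^P'.j ≤ csmall * (2:ℝ)^P.j →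
      ∃ i i' : Fin n, i ≠ i' ∧ Tile.lesim' (α i) c₃ (MultiTile.tile P' i) (MultiTile.tile P i) ∧
        Tile.lesim' (α i') c₃ (MultiTile.tile P' i') (MultiTile.tile P i'))

def AdaptedBump (w : Iv) (Ca : ℕ → ℝ) (M : ℕ) (ψ : ℝ → ℂ) : Prop :=
  ContDiff ℝ (⊤ : ℕ∞) ψ ∧ (∀ ξ, ξ ∉ w.set → ψ ξ = 0) ∧ (∀ ξ ∈ w.dil (9/10), ψ ξ = 1) ∧
  ∀ a : ℕ, a ≤ M → ∀ ξ : ℝ, ‖iteratedDeriv a ψ ξ‖ ≤ Ca a / w.len ^ a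

def mulOp (ψ : ℝ → ℂ) (f : ℝ → ℂ) (x : ℝ) : ℂ :=
  ∫ ξ : ℝ, ψ ξ * 𝓕 f ξ * Complex.exp (2 * Real.pi * Complex.I * ξ * x)

def tileNorm (N : ℕ) (ψ : ℝ → ℂ) (P : Tile) (f : ℝ → ℂ) : ℝ :=
  ((2:ℝ)^P.j)⁻¹ * ∫ x : ℝ, ‖mulOp ψ f x‖ * (P.timeIv).chi x ^ (2*N)

def IsTree (n : ℕ) (α : Fin n → ℝ) (Ps T : Finset (MultiTile n)) (PT : MultiTile n)
    (jdx : Fin n) : Prop :=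
  PT ∈ Ps ∧ T ⊆ Ps ∧ ∀ P ∈ T, Tile.le' (α jdx) (MultiTile.tile P jdx) (MultiTile.tile PT jdx)

def treeNorm (n N : ℕ) (ψ : Fin n → Tile → ℝ → ℂ) (i : Fin n) (f : ℝ → ℂ)
    (T : Finset (MultiTile n)) : ℝ :=
  ⨆ P ∈ T, tileNorm N (ψ i (MultiTile.tile P i)) (MultiTile.tile P i) f

def treeSize (n N : ℕ) (α : Fin n → ℝ) (c₃ : ℝ) (ψ : Fin n → Tile → ℝ → ℂ)
    (i : Fin n) (f : ℝ → ℂ) (T : Finset (MultiTile n)) (PT : MultiTile n) : ℝ :=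
  Real.sqrt (((2:ℝ)^PT.j)⁻¹ * ∑ P ∈ T,
      if Tile.lesim' (α i) c₃ (MultiTile.tile P i) (MultiTile.tile PT i)
      then (2:ℝ)^P.j * tileNorm N (ψ i (MultiTile.tile P i)) (MultiTile.tile P i) f ^ 2 else 0)
    + treeNorm n N ψ i f T

def StronglyDisjoint (n : ℕ) (α : Fin n → ℝ) (i : Fin n)
    (T : Finset (MultiTile n)) (PT : MultiTile n)
    (T' : Finset (MultiTile n)) (PT' : MultiTile n) : Prop :=
  (∀ P ∈ T, ∀ P' ∈ T', MultiTile.tile P i ≠ MultiTile.tile P' i) ∧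
  (∀ P ∈ T, ∀ P' ∈ T',
    ((MultiTile.tile P i).freqIv (α i)).set ⊂ ((MultiTile.tile P' i).freqIv (α i)).set →
    (MultiTile.timeIv P').set ∩ (MultiTile.timeIv PT).set = ∅) ∧
  (∀ P ∈ T, ∀ P' ∈ T',
    ((MultiTile.tile P' i).freqIv (α i)).set ⊂ ((MultiTile.tile P i).freqIv (α i)).set →
    (MultiTile.timeIv P).set ∩ (MultiTile.timeIv PT').set = ∅)

def setDist {E : Type*} [PseudoMetricSpace E] (s t : Set E) : ℝ :=
  ⨅ x ∈ s, Metric.infDist x t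

lemma tileNorm_nonneg (N : ℕ) (ψ : ℝ → ℂ) (P : Tile) (f : ℝ → ℂ) : 0 ≤ tileNorm N ψ P f := by
  unfold tileNorm
  apply mul_nonneg (inv_nonneg.2 (zpow_pos two_pos P.j).le)
  apply integral_nonneg
  intro x
  apply mul_nonneg (norm_nonneg _)
  apply pow_nonneg
  unfold Iv.chi
  apply inv_nonneg.2
  have h1 : (0:ℝ) ≤ Metric.infDist x (P.timeIv).set := Metric.infDist_nonneg
  have h2 : (0:ℝ) < (P.timeIv).len := zpow_pos two_pos P.j
  positivity

lemma treeNorm_nonneg (n N : ℕ) (ψ : Fin n → Tile → ℝ → ℂ) (i : Fin n) (f : ℝ → ℂ)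
    (T : Finset (MultiTile n)) : 0 ≤ treeNorm n N ψ i f T :=
  Real.iSup_nonneg fun _ => Real.iSup_nonneg fun _ => tileNorm_nonneg _ _ _ _

lemma tileNorm_le_treeNorm (n N : ℕ) (ψ : Fin n → Tile → ℝ → ℂ) (i : Fin n) (f : ℝ → ℂ)
    {T : Finset (MultiTile n)} {P : MultiTile n} (hP : P ∈ T) :
    tileNorm N (ψ i (MultiTile.tile P i)) (MultiTile.tile P i) f ≤ treeNorm n N ψ i f T := by
  unfold treeNorm
  have hbdd : BddAbove (Set.range fun Q : MultiTile n =>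
      ⨆ _ : Q ∈ T, tileNorm N (ψ i (MultiTile.tile Q i)) (MultiTile.tile Q i) f) := by
    apply Set.Finite.bddAbove
    apply Set.Finite.subset (Set.Finite.insert 0 (T.finite_toSet.image
      (fun Q => tileNorm N (ψ i (MultiTile.tile Q i)) (MultiTile.tile Q i) f)))
    rintro _ ⟨Q, rfl⟩
    dsimp only
    by_cases hQ : Q ∈ T
    · rw [ciSup_pos hQ]
      exact Set.mem_insert_of_mem _ ⟨Q, hQ, rfl⟩
    · haveI : IsEmpty (Q ∈ T) := ⟨hQ⟩
      rw [Real.iSup_of_isEmpty]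
      exact Set.mem_insert _ _
  exact le_ciSup_of_le hbdd P (by rw [ciSup_pos hP])

lemma treeSize_nonneg (n N : ℕ) (α : Fin n → ℝ) (c₃ : ℝ) (ψ : Fin n → Tile → ℝ → ℂ)
    (i : Fin n) (f : ℝ → ℂ) (T : Finset (MultiTile n)) (PT : MultiTile n) :
    0 ≤ treeSize n N α c₃ ψ i f T PT :=
  add_nonneg (Real.sqrt_nonneg _) (treeNorm_nonneg n N ψ i f T)

lemma treeNorm_le_treeSize (n N : ℕ) (α : Fin n → ℝ) (c₃ : ℝ) (ψ : Fin n → Tile → ℝ → ℂ)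
    (i : Fin n) (f : ℝ → ℂ) (T : Finset (MultiTile n)) (PT : MultiTile n) :
    treeNorm n N ψ i f T ≤ treeSize n N α c₃ ψ i f T PT :=
  le_add_of_nonneg_left (Real.sqrt_nonneg _)

lemma prod_split {n : ℕ} (h : Fin n → ℝ) (i₁ i₂ : Fin n) (h12 : i₁ ≠ i₂) :
    ∏ i, h i = h i₁ * (h i₂ * ∏ i ∈ Finset.univ.filter (fun i => i ≠ i₁ ∧ i ≠ i₂), h i) := by
  have e : Finset.univ.filter (fun i : Fin n => i ≠ i₁ ∧ i ≠ i₂)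
      = (Finset.univ.erase i₁).erase i₂ := by
    ext i; simp [Finset.mem_erase, and_comm]
  rw [e, Finset.mul_prod_erase _ _ (Finset.mem_erase.2 ⟨Ne.symm h12, Finset.mem_univ _⟩),
      Finset.mul_prod_erase _ _ (Finset.mem_univ i₁)]

lemma Ioo_incl {l L l' u' : ℝ} (hL : 0 < L) (h : Set.Ioo l (l+L) ⊆ Set.Ioo l' u') :
    l' ≤ l ∧ l + L ≤ u' :=
  (Set.Ioo_subset_Ioo_iff (by linarith)).1 h
lemma kf_bound {β c₃ : ℝ} {j kt k : ℤ} {W : Iv} (hW : 0 < W.len)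
    (h : W.set ⊆ (Tile.freqIv β ⟨j, kt, k⟩).dil c₃) :
    ⌈W.l / (2:ℝ)^(-j) - (-1:ℝ)^(-j) * β - 1/2 - c₃/2⌉ ≤ k ∧
      k ≤ ⌈W.l / (2:ℝ)^(-j) - (-1:ℝ)^(-j) * β - 1/2 - c₃/2⌉ + ⌈c₃⌉ := by
  simp only [Iv.set, Iv.dil, Tile.freqIv] at h
  have hL : (0:ℝ) < (2:ℝ)^(-j) := zpow_pos two_pos _
  obtain ⟨h1, h2⟩ := (Set.Ioo_subset_Ioo_iff (by linarith)).1 h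
  set L : ℝ := (2:ℝ)^(-j) with hLdef
  set ε : ℝ := (-1:ℝ)^(-j) with hε
  set t : ℝ := W.l / L with ht
  have hup : (k:ℝ) + ε*β + 1/2 - c₃/2 ≤ t := by
    rw [ht, le_div_iff₀ hL]; nlinarith [h1]
  have hlow : t + W.len / L ≤ (k:ℝ) + ε*β + 1/2 + c₃/2 := by
    have h3 : (W.l + W.len) / L ≤ (k:ℝ) + ε*β + 1/2 + c₃/2 := by
      rw [div_le_iff₀ hL]; nlinarith [h2]
    rw [ht, ← add_div]; exact h3
  have hpos : 0 < W.len / L := div_pos hW hL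
  constructor
  · apply Int.ceil_le.2; linarith
  · have hk : (k:ℝ) ≤ (t - ε*β - 1/2 - c₃/2) + c₃ := by linarith
    have hk2 : (k:ℝ) ≤ (⌈t - ε*β - 1/2 - c₃/2⌉ : ℝ) + (⌈c₃⌉ : ℝ) :=
      hk.trans (add_le_add (Int.le_ceil _) (Int.le_ceil _))
    exact_mod_cast hk2

lemma kt_bound {j jT kt kT : ℤ} {J : ℕ} (hd : jT - j ≤ (J:ℤ))
    (h : Set.Ioo ((2:ℝ)^j * kt) ((2:ℝ)^j * kt + (2:ℝ)^j) ⊆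
         Set.Ioo ((2:ℝ)^jT * kT) ((2:ℝ)^jT * kT + (2:ℝ)^jT)) :
    ⌈(2:ℝ)^jT * kT / (2:ℝ)^j⌉ ≤ kt ∧ kt ≤ ⌈(2:ℝ)^jT * kT / (2:ℝ)^j⌉ + 2^J - 1 := by
  have hL : (0:ℝ) < (2:ℝ)^j := zpow_pos two_pos _
  obtain ⟨h1, h2⟩ := (Set.Ioo_subset_Ioo_iff (by linarith)).1 h
  set X : ℝ := (2:ℝ)^jT * kT / (2:ℝ)^j with hX
  have hlow : X ≤ (kt:ℝ) := by rw [hX, div_le_iff₀ hL]; linarith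
  have hup : (kt:ℝ) + 1 ≤ X + (2:ℝ)^(jT - j) := by
    rw [zpow_sub₀ (two_ne_zero), hX, ← add_div, le_div_iff₀ hL]
    linarith
  have h2J : (2:ℝ)^(jT - j) ≤ ((2^J : ℕ) : ℝ) := by
    calc (2:ℝ)^(jT-j) ≤ (2:ℝ)^(J:ℤ) := zpow_le_zpow_right₀ one_le_two hd
    _ = ((2^J : ℕ) : ℝ) := by rw [zpow_natCast]; push_cast; ring
  refine ⟨Int.ceil_le.2 hlow, ?_⟩
  have hk : (kt:ℝ) ≤ (⌈X⌉ : ℝ) + (2^J : ℕ) - 1 := by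
    have := Int.le_ceil X
    linarith
  exact_mod_cast hk

lemma le_G {n : ℕ} (hn : 2 ≤ n) (g : Fin n → Fin n → ℝ) (hnn : ∀ i₁ i₂, 0 ≤ g i₁ i₂) :
    (∀ i₁ i₂, i₁ < i₂ → g i₁ i₂ ≤ ⨆ (i₁) (i₂) (_ : i₁ < i₂), g i₁ i₂) ∧
    0 ≤ ⨆ (i₁) (i₂) (_ : i₁ < i₂), g i₁ i₂ := by
  have hb2 : ∀ i₁ : Fin n, BddAbove (Set.range fun i₂ => ⨆ (_ : i₁ < i₂), g i₁ i₂) :=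
    fun i₁ => (Set.finite_range _).bddAbove
  have hb1 : BddAbove (Set.range fun i₁ : Fin n => ⨆ i₂, ⨆ (_ : i₁ < i₂), g i₁ i₂) :=
    (Set.finite_range _).bddAbove
  have hle : ∀ i₁ i₂, i₁ < i₂ → g i₁ i₂ ≤ ⨆ (i₁) (i₂) (_ : i₁ < i₂), g i₁ i₂ := fun i₁ i₂ h =>
    le_ciSup_of_le hb1 i₁ (le_ciSup_of_le (hb2 i₁) i₂ (le_of_eq (ciSup_pos (f := fun _ => g i₁ i₂) h).symm))
  refine ⟨hle, ?_⟩
  have h01 : (⟨0, by omega⟩ : Fin n) < ⟨1, by omega⟩ := by simp [Fin.lt_def]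
  exact (hnn _ _).trans (hle _ _ h01)

lemma fiber_card {n : ℕ} (hn : 0 < n) (α : Fin n → ℝ) {c₃ : ℝ} (hc₃ : 0 < c₃) (J : ℕ)
    {S : Finset (MultiTile n)} {PT : MultiTile n} {j : ℤ} (hd : PT.j - j ≤ (J:ℤ))
    (hS : ∀ P ∈ S, P.j = j ∧ ∀ i, Tile.lesim (α i) c₃ (MultiTile.tile P i) (MultiTile.tile PT i)) :
    S.card ≤ 2^J * ((⌈c₃⌉).toNat + 1)^n := by
  classical
  set u : ℤ := ⌈(2:ℝ)^PT.j * PT.kt / (2:ℝ)^j⌉ with hu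
  set lo : Fin n → ℤ := fun i =>
    ⌈(Tile.freqIv (α i) (MultiTile.tile PT i)).l / (2:ℝ)^(-j) - (-1:ℝ)^(-j) * (α i) - 1/2 - c₃/2⌉
    with hlo
  have hmaps : ∀ P ∈ S, (P.kt, P.kf) ∈
      (Finset.Icc u (u + 2^J - 1)) ×ˢ
        Fintype.piFinset (fun i => Finset.Icc (lo i) (lo i + ⌈c₃⌉)) := by
    intro P hP
    obtain ⟨hPj, hles⟩ := hS P hP
    subst hPj
    rw [Finset.mem_product]
    constructor
    · have htime := (hles ⟨0, hn⟩).1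
      simp only [MultiTile.tile, Tile.timeIv, Iv.set] at htime
      rw [Finset.mem_Icc]
      exact kt_bound hd htime
    · rw [Fintype.mem_piFinset]
      intro i
      have hfreq := (hles i).2
      simp only [MultiTile.tile] at hfreq
      rw [Finset.mem_Icc]
      exact kf_bound (show (0:ℝ) < (Tile.freqIv (α i) (MultiTile.tile PT i)).len from
        zpow_pos two_pos _) hfreq
  have hinj : Set.InjOn (fun P : MultiTile n => (P.kt, P.kf)) S := by
    intro P hP Q hQ heq
    have h1 : P.j = j := (hS P hP).1
    have h2 : Q.j = j := (hS Q hQ).1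
    simp only [Prod.mk.injEq] at heq
    cases P; cases Q; simp_all
  calc S.card ≤ ((Finset.Icc u (u + 2^J - 1)) ×ˢ
        Fintype.piFinset (fun i => Finset.Icc (lo i) (lo i + ⌈c₃⌉))).card :=
        Finset.card_le_card_of_injOn _ hmaps hinj
    _ = (Finset.Icc u (u + 2^J - 1)).card * ∏ i, (Finset.Icc (lo i) (lo i + ⌈c₃⌉)).card := by
        rw [Finset.card_product, Fintype.card_piFinset]
    _ ≤ 2^J * ((⌈c₃⌉).toNat + 1)^n := by
        apply Nat.mul_le_mul
        · rw [Int.card_Icc, show u + 2^J - 1 + 1 - u = ((2^J : ℕ) : ℤ) by push_cast; ring,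
            Int.toNat_natCast]
        · have hb : ∀ i ∈ Finset.univ, (Finset.Icc (lo i) (lo i + ⌈c₃⌉)).card ≤ (⌈c₃⌉).toNat + 1 := by
            intro i _; rw [Int.card_Icc]; omega
          calc ∏ i, (Finset.Icc (lo i) (lo i + ⌈c₃⌉)).card
              ≤ ((⌈c₃⌉).toNat + 1) ^ (Finset.univ : Finset (Fin n)).card :=
                Finset.prod_le_pow_card _ _ _ hb
            _ = ((⌈c₃⌉).toNat + 1)^n := by rw [Finset.card_univ, Fintype.card_fin]
/-- Lemma 7.3 (`Cauchy-Schwarz`): the estimate for a single tree in terms of two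
sizes and the remaining sup norms. -/
theorem statement14 (n : ℕ) (hn : 2 ≤ n) (N : ℕ)
    (α : Fin n → ℝ) (hα : ∀ i, α i = 0 ∨ α i = 1/3 ∨ α i = 2/3)
    (Ca : ℕ → ℝ) (c₃ csmall : ℝ) (hc₃ : 0 < c₃) (hcs : 0 < csmall) :
    ∃ (M : ℕ) (C : ℝ),
      ∀ ψ : Fin n → Tile → ℝ → ℂ,
        (∀ i P, AdaptedBump (Tile.freqIv (α i) P) Ca M (ψ i P)) →
        ∀ (f : Fin n → ℝ → ℂ) (Ps : Finset (MultiTile n)),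
          HasRank n 1 α c₃ csmall Ps →
          ∀ (T : Finset (MultiTile n)) (PT : MultiTile n) (jdx : Fin n),
            IsTree n α Ps T PT jdx →
            (∑ P ∈ T, (2:ℝ) ^ P.j *
                ∏ i, tileNorm N (ψ i (MultiTile.tile P i)) (MultiTile.tile P i) (f i)) ≤
              C * (2:ℝ) ^ PT.j *
                ⨆ (i₁ : Fin n) (i₂ : Fin n) (_ : i₁ < i₂),
                  treeSize n N α c₃ ψ i₁ (f i₁) T PT * treeSize n N α c₃ ψ i₂ (f i₂) T PT *
                    ∏ i ∈ Finset.univ.filter (fun i : Fin n => i ≠ i₁ ∧ i ≠ i₂),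
                      treeNorm n N ψ i (f i) T := by
  classical
  obtain ⟨J, hJ⟩ := exists_pow_lt_of_lt_one hcs (by norm_num : (1/2:ℝ) < 1)
  set m : ℕ := (⌈c₃⌉).toNat + 1 with hm
  refine ⟨0, (((J+1) * (2^J * m^n) + n*n : ℕ) : ℝ), ?_⟩
  intro ψ hψ f Ps hrank T PT jdx htree
  obtain ⟨hPTmem, hTsub, hlej⟩ := htree
  -- abbreviations
  set tn : Fin n → MultiTile n → ℝ :=
    fun i P => tileNorm N (ψ i (MultiTile.tile P i)) (MultiTile.tile P i) (f i) with htn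
  set tN : Fin n → ℝ := fun i => treeNorm n N ψ i (f i) T with htNdef
  set tS : Fin n → ℝ := fun i => treeSize n N α c₃ ψ i (f i) T PT with htSdef
  have htn0 : ∀ i P, 0 ≤ tn i P := fun i P => tileNorm_nonneg _ _ _ _
  have htN0 : ∀ i, 0 ≤ tN i := fun i => treeNorm_nonneg _ _ _ _ _ _
  have htS0 : ∀ i, 0 ≤ tS i := fun i => treeSize_nonneg _ _ _ _ _ _ _ _ _
  have htnN : ∀ i, ∀ P ∈ T, tn i P ≤ tN i := fun i P hP => tileNorm_le_treeNorm n N ψ i (f i) hP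
  have htNS : ∀ i, tN i ≤ tS i := fun i => treeNorm_le_treeSize n N α c₃ ψ i (f i) T PT
  -- the supremum
  obtain ⟨hGp0, hG0⟩ := le_G hn (fun i₁ i₂ => tS i₁ * tS i₂ *
      ∏ i ∈ Finset.univ.filter (fun i : Fin n => i ≠ i₁ ∧ i ≠ i₂), tN i)
    (fun i₁ i₂ => mul_nonneg (mul_nonneg (htS0 _) (htS0 _))
      (Finset.prod_nonneg fun i _ => htN0 i))
  set G : ℝ := ⨆ (i₁ : Fin n) (i₂ : Fin n) (_ : i₁ < i₂),
      tS i₁ * tS i₂ *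
        ∏ i ∈ Finset.univ.filter (fun i : Fin n => i ≠ i₁ ∧ i ≠ i₂), tN i with hGdef
  have hGp : ∀ i₁ i₂ : Fin n, i₁ < i₂ →
      tS i₁ * tS i₂ * ∏ i ∈ Finset.univ.filter (fun i : Fin n => i ≠ i₁ ∧ i ≠ i₂), tN i ≤ G :=
    fun i₁ i₂ h => hGp0 i₁ i₂ h
  have hG0' : (0:ℝ) ≤ G := hG0
  have h2PT : (0:ℝ) < (2:ℝ)^PT.j := zpow_pos two_pos _
  -- rank extraction
  have hsm : StrictMono (fun _ : Fin 1 => jdx) := fun a b hab =>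
    absurd hab (by rw [Subsingleton.elim a b]; exact lt_irrefl b)
  have hrk : ∀ P ∈ T, (∀ i, Tile.lesim (α i) c₃ (MultiTile.tile P i) (MultiTile.tile PT i)) ∧
      ((2:ℝ)^P.j ≤ csmall * (2:ℝ)^PT.j →
        ∃ i i' : Fin n, i ≠ i' ∧
          Tile.lesim' (α i) c₃ (MultiTile.tile P i) (MultiTile.tile PT i) ∧
          Tile.lesim' (α i') c₃ (MultiTile.tile P i') (MultiTile.tile PT i')) :=
    fun P hP => hrank PT hPTmem P (hTsub hP) (fun _ => jdx) hsm (fun _ => hlej P hP)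
  have hscale : ∀ P ∈ T, (2:ℝ)^P.j ≤ (2:ℝ)^PT.j := by
    intro P hP
    have ht := ((hrk P hP).1 jdx).1
    simp only [MultiTile.tile, Tile.timeIv, Iv.set] at ht
    have hL : (0:ℝ) < (2:ℝ)^P.j := zpow_pos two_pos _
    obtain ⟨h1, h2⟩ := (Set.Ioo_subset_Ioo_iff (by linarith)).1 ht
    linarith
  -- pair indices 0, 1
  have hi01 : (⟨0, by omega⟩ : Fin n) < (⟨1, by omega⟩ : Fin n) := by simp [Fin.lt_def]
  -- split the sum
  rw [← Finset.sum_filter_add_sum_filter_not T (fun P => (2:ℝ)^P.j ≤ csmall * (2:ℝ)^PT.j)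
    (fun P => (2:ℝ)^P.j * ∏ i, tn i P)]
  -- BIG PART
  have hbig : ∑ P ∈ T.filter (fun P => ¬((2:ℝ)^P.j ≤ csmall * (2:ℝ)^PT.j)),
      (2:ℝ)^P.j * ∏ i, tn i P ≤ (((J+1) * (2^J * m^n) : ℕ) : ℝ) * ((2:ℝ)^PT.j * G) := by
    set Tb := T.filter (fun P => ¬((2:ℝ)^P.j ≤ csmall * (2:ℝ)^PT.j)) with hTb
    have hmemj : ∀ P ∈ Tb, P.j ∈ Finset.Icc (PT.j - J) PT.j := by
      intro P hPb
      obtain ⟨hPT', hns⟩ := Finset.mem_filter.1 hPb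
      have hup : P.j ≤ PT.j := (zpow_le_zpow_iff_right₀ one_lt_two).1 (hscale P hPT')
      have hlow : PT.j - (J:ℤ) < P.j := by
        apply (zpow_lt_zpow_iff_right₀ (one_lt_two (α := ℝ))).1
        have h1 : (2:ℝ)^(PT.j - (J:ℤ)) = (1/2:ℝ)^J * 2^PT.j := by
          rw [sub_eq_add_neg, zpow_add₀ (two_ne_zero), one_div, inv_pow, ← zpow_natCast,
            ← zpow_neg]
          ring
        rw [h1]
        exact lt_trans (mul_lt_mul_of_pos_right hJ h2PT) (not_le.mp hns)
      exact Finset.mem_Icc.2 ⟨by omega, hup⟩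
    have hcard : Tb.card ≤ (J+1) * (2^J * m^n) := by
      rw [Finset.card_eq_sum_card_fiberwise hmemj]
      have hfib : ∀ j' ∈ Finset.Icc (PT.j - (J:ℤ)) PT.j,
          (Tb.filter (fun P => P.j = j')).card ≤ 2^J * m^n := by
        intro j' hj'
        have hd : PT.j - j' ≤ (J:ℤ) := by
          have := Finset.mem_Icc.1 hj'
          omega
        apply fiber_card (by omega : 0 < n) α hc₃ J hd
        intro P hP
        obtain ⟨hPb, hPj⟩ := Finset.mem_filter.1 hP
        exact ⟨hPj, (hrk P (Finset.mem_filter.1 hPb).1).1⟩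
      calc ∑ j' ∈ Finset.Icc (PT.j - (J:ℤ)) PT.j, (Tb.filter (fun P => P.j = j')).card
          ≤ ∑ _j' ∈ Finset.Icc (PT.j - (J:ℤ)) PT.j, 2^J * m^n := Finset.sum_le_sum hfib
        _ = (Finset.Icc (PT.j - (J:ℤ)) PT.j).card * (2^J * m^n) := by
            rw [Finset.sum_const, smul_eq_mul]
        _ ≤ (J+1) * (2^J * m^n) := by
            apply Nat.mul_le_mul_right
            rw [Int.card_Icc]
            omega
    have hterm : ∀ P ∈ Tb, (2:ℝ)^P.j * ∏ i, tn i P ≤ (2:ℝ)^PT.j * G := by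
      intro P hPb
      have hPT' : P ∈ T := (Finset.mem_filter.1 hPb).1
      have hne : (⟨0, by omega⟩ : Fin n) ≠ (⟨1, by omega⟩ : Fin n) := ne_of_lt hi01
      calc (2:ℝ)^P.j * ∏ i, tn i P
          = (2:ℝ)^P.j * (tn ⟨0, by omega⟩ P * (tn ⟨1, by omega⟩ P *
            ∏ i ∈ Finset.univ.filter
              (fun i : Fin n => i ≠ ⟨0, by omega⟩ ∧ i ≠ ⟨1, by omega⟩), tn i P)) := by
            rw [prod_split (fun i => tn i P) _ _ hne]
        _ ≤ (2:ℝ)^PT.j * (tS ⟨0, by omega⟩ * (tS ⟨1, by omega⟩ *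
            ∏ i ∈ Finset.univ.filter
              (fun i : Fin n => i ≠ ⟨0, by omega⟩ ∧ i ≠ ⟨1, by omega⟩), tN i)) := by
            apply mul_le_mul (hscale P hPT') ?_ ?_ h2PT.le
            · apply mul_le_mul ((htnN _ P hPT').trans (htNS _)) ?_ ?_ (htS0 _)
              · apply mul_le_mul ((htnN _ P hPT').trans (htNS _))
                  (Finset.prod_le_prod (fun i _ => htn0 i P) (fun i _ => htnN i P hPT'))
                  (Finset.prod_nonneg (fun i _ => htn0 i P)) (htS0 _)
              · exact mul_nonneg (htn0 _ P) (Finset.prod_nonneg (fun i _ => htn0 i P))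
            · exact mul_nonneg (htn0 _ P)
                (mul_nonneg (htn0 _ P) (Finset.prod_nonneg (fun i _ => htn0 i P)))
        _ = (2:ℝ)^PT.j * (tS ⟨0, by omega⟩ * tS ⟨1, by omega⟩ *
            ∏ i ∈ Finset.univ.filter
              (fun i : Fin n => i ≠ ⟨0, by omega⟩ ∧ i ≠ ⟨1, by omega⟩), tN i) := by ring
        _ ≤ (2:ℝ)^PT.j * G := mul_le_mul_of_nonneg_left (hGp _ _ hi01) h2PT.le
    calc ∑ P ∈ Tb, (2:ℝ)^P.j * ∏ i, tn i P
        ≤ Tb.card • ((2:ℝ)^PT.j * G) := Finset.sum_le_card_nsmul _ _ _ hterm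
      _ = (Tb.card : ℝ) * ((2:ℝ)^PT.j * G) := nsmul_eq_mul _ _
      _ ≤ (((J+1) * (2^J * m^n) : ℕ) : ℝ) * ((2:ℝ)^PT.j * G) := by
          apply mul_le_mul_of_nonneg_right _ (mul_nonneg h2PT.le hG0')
          exact_mod_cast hcard
  -- SMALL PART
  have hsmall : ∑ P ∈ T.filter (fun P => (2:ℝ)^P.j ≤ csmall * (2:ℝ)^PT.j),
      (2:ℝ)^P.j * ∏ i, tn i P ≤ ((n*n : ℕ) : ℝ) * ((2:ℝ)^PT.j * G) := by
    set Ts := T.filter (fun P => (2:ℝ)^P.j ≤ csmall * (2:ℝ)^PT.j) with hTs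
    set σ : MultiTile n → Fin n × Fin n := fun P =>
      if h : ∃ q : Fin n × Fin n, q.1 < q.2 ∧
          Tile.lesim' (α q.1) c₃ (MultiTile.tile P q.1) (MultiTile.tile PT q.1) ∧
          Tile.lesim' (α q.2) c₃ (MultiTile.tile P q.2) (MultiTile.tile PT q.2)
      then h.choose else (⟨0, by omega⟩, ⟨0, by omega⟩) with hσdef
    have hσ : ∀ P ∈ Ts, (σ P).1 < (σ P).2 ∧
        Tile.lesim' (α (σ P).1) c₃ (MultiTile.tile P (σ P).1) (MultiTile.tile PT (σ P).1) ∧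
        Tile.lesim' (α (σ P).2) c₃ (MultiTile.tile P (σ P).2) (MultiTile.tile PT (σ P).2) := by
      intro P hP
      obtain ⟨hPT', hsmallP⟩ := Finset.mem_filter.1 hP
      obtain ⟨i, i', hne, hl1, hl2⟩ := (hrk P hPT').2 hsmallP
      have hex : ∃ q : Fin n × Fin n, q.1 < q.2 ∧
          Tile.lesim' (α q.1) c₃ (MultiTile.tile P q.1) (MultiTile.tile PT q.1) ∧
          Tile.lesim' (α q.2) c₃ (MultiTile.tile P q.2) (MultiTile.tile PT q.2) := by
        rcases lt_or_gt_of_ne hne with h | h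
        · exact ⟨(i, i'), h, hl1, hl2⟩
        · exact ⟨(i', i), h, hl2, hl1⟩
      simp only [hσdef, dif_pos hex]
      exact hex.choose_spec
    rw [← Finset.sum_fiberwise_of_maps_to (t := (Finset.univ : Finset (Fin n × Fin n)))
      (fun P _ => Finset.mem_univ (σ P)) (fun P => (2:ℝ)^P.j * ∏ i, tn i P)]
    have hfiber : ∀ q : Fin n × Fin n,
        ∑ P ∈ Ts.filter (fun P => σ P = q), (2:ℝ)^P.j * ∏ i, tn i P ≤ (2:ℝ)^PT.j * G := by
      intro q
      set Sq := Ts.filter (fun P => σ P = q) with hSqdef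
      rcases Finset.eq_empty_or_nonempty Sq with he | ⟨P₀, hP₀⟩
      · rw [he, Finset.sum_empty]
        exact mul_nonneg h2PT.le hG0'
      · obtain ⟨hP₀Ts, hσP₀⟩ := Finset.mem_filter.1 hP₀
        have hq0 := hσ P₀ hP₀Ts
        rw [hσP₀] at hq0
        have hq12 : q.1 < q.2 := hq0.1
        have hqne : q.1 ≠ q.2 := ne_of_lt hq12
        have hprop : ∀ P ∈ Sq, P ∈ T ∧
            Tile.lesim' (α q.1) c₃ (MultiTile.tile P q.1) (MultiTile.tile PT q.1) ∧
            Tile.lesim' (α q.2) c₃ (MultiTile.tile P q.2) (MultiTile.tile PT q.2) := by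
          intro P hP
          obtain ⟨hPTs, hσP⟩ := Finset.mem_filter.1 hP
          have h := hσ P hPTs
          rw [hσP] at h
          exact ⟨(Finset.mem_filter.1 hPTs).1, h.2.1, h.2.2⟩
        set B : ℝ := ∏ i ∈ Finset.univ.filter (fun i : Fin n => i ≠ q.1 ∧ i ≠ q.2), tN i
          with hB
        have hB0 : 0 ≤ B := Finset.prod_nonneg fun i _ => htN0 i
        have hstep1 : ∑ P ∈ Sq, (2:ℝ)^P.j * ∏ i, tn i P ≤
            (∑ P ∈ Sq, (Real.sqrt ((2:ℝ)^P.j) * tn q.1 P) *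
              (Real.sqrt ((2:ℝ)^P.j) * tn q.2 P)) * B := by
          rw [Finset.sum_mul]
          apply Finset.sum_le_sum
          intro P hP
          have hPT' : P ∈ T := (hprop P hP).1
          have hss : Real.sqrt ((2:ℝ)^P.j) * Real.sqrt ((2:ℝ)^P.j) = (2:ℝ)^P.j :=
            Real.mul_self_sqrt (zpow_pos two_pos _).le
          calc (2:ℝ)^P.j * ∏ i, tn i P
              = (2:ℝ)^P.j * (tn q.1 P * (tn q.2 P *
                ∏ i ∈ Finset.univ.filter (fun i : Fin n => i ≠ q.1 ∧ i ≠ q.2), tn i P)) := by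
                rw [prod_split (fun i => tn i P) _ _ hqne]
            _ ≤ (2:ℝ)^P.j * (tn q.1 P * (tn q.2 P * B)) := by
                have hin : ∏ i ∈ Finset.univ.filter (fun i : Fin n => i ≠ q.1 ∧ i ≠ q.2), tn i P
                    ≤ B :=
                  Finset.prod_le_prod (fun i _ => htn0 i P) (fun i _ => htnN i P hPT')
                have h1 := mul_le_mul_of_nonneg_left hin (htn0 q.2 P)
                have h2 := mul_le_mul_of_nonneg_left h1 (htn0 q.1 P)
                exact mul_le_mul_of_nonneg_left h2 (zpow_pos two_pos P.j).le
            _ = (Real.sqrt ((2:ℝ)^P.j) * tn q.1 P) * (Real.sqrt ((2:ℝ)^P.j) * tn q.2 P) * B := by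
                rw [show (Real.sqrt ((2:ℝ)^P.j) * tn q.1 P) * (Real.sqrt ((2:ℝ)^P.j) * tn q.2 P)
                    = (Real.sqrt ((2:ℝ)^P.j) * Real.sqrt ((2:ℝ)^P.j)) * (tn q.1 P * tn q.2 P)
                  by ring, hss]
                ring
        have key : ∀ i : Fin n,
            (∀ P ∈ Sq, Tile.lesim' (α i) c₃ (MultiTile.tile P i) (MultiTile.tile PT i)) →
            Real.sqrt (∑ P ∈ Sq, (Real.sqrt ((2:ℝ)^P.j) * tn i P)^2) ≤
              Real.sqrt ((2:ℝ)^PT.j) * tS i := by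
          intro i hall
          set Qi : ℝ := ∑ P ∈ T,
            (if Tile.lesim' (α i) c₃ (MultiTile.tile P i) (MultiTile.tile PT i)
              then (2:ℝ)^P.j * tn i P ^ 2 else 0) with hQidef
          have hrw : ∀ P : MultiTile n,
              (Real.sqrt ((2:ℝ)^P.j) * tn i P)^2 = (2:ℝ)^P.j * tn i P^2 := fun P => by
            rw [mul_pow, Real.sq_sqrt (zpow_pos two_pos _).le]
          have h1 : ∑ P ∈ Sq, (Real.sqrt ((2:ℝ)^P.j) * tn i P)^2 ≤ Qi := by
            rw [hQidef, ← Finset.sum_filter]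
            calc ∑ P ∈ Sq, (Real.sqrt ((2:ℝ)^P.j) * tn i P)^2
                = ∑ P ∈ Sq, (2:ℝ)^P.j * tn i P^2 := Finset.sum_congr rfl fun P _ => hrw P
              _ ≤ ∑ P ∈ T.filter (fun P => Tile.lesim' (α i) c₃
                    (MultiTile.tile P i) (MultiTile.tile PT i)), (2:ℝ)^P.j * tn i P^2 := by
                  apply Finset.sum_le_sum_of_subset_of_nonneg
                  · intro P hP
                    exact Finset.mem_filter.2 ⟨(hprop P hP).1, hall P hP⟩
                  · intro P _ _
                    exact mul_nonneg (zpow_pos two_pos _).le (sq_nonneg _)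
          calc Real.sqrt (∑ P ∈ Sq, (Real.sqrt ((2:ℝ)^P.j) * tn i P)^2)
              ≤ Real.sqrt Qi := Real.sqrt_le_sqrt h1
            _ = Real.sqrt ((2:ℝ)^PT.j * (((2:ℝ)^PT.j)⁻¹ * Qi)) := by
                rw [← mul_assoc, mul_inv_cancel₀ (ne_of_gt h2PT), one_mul]
            _ = Real.sqrt ((2:ℝ)^PT.j) * Real.sqrt (((2:ℝ)^PT.j)⁻¹ * Qi) :=
                Real.sqrt_mul h2PT.le _
            _ ≤ Real.sqrt ((2:ℝ)^PT.j) * tS i := by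
                apply mul_le_mul_of_nonneg_left _ (Real.sqrt_nonneg _)
                have hts : tS i = Real.sqrt (((2:ℝ)^PT.j)⁻¹ * Qi) + tN i := rfl
                rw [hts]
                exact le_add_of_nonneg_right (htN0 i)
        have hcs2 : (∑ P ∈ Sq, (Real.sqrt ((2:ℝ)^P.j) * tn q.1 P) *
              (Real.sqrt ((2:ℝ)^P.j) * tn q.2 P))^2 ≤
            (∑ P ∈ Sq, (Real.sqrt ((2:ℝ)^P.j) * tn q.1 P)^2) *
              (∑ P ∈ Sq, (Real.sqrt ((2:ℝ)^P.j) * tn q.2 P)^2) :=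
          Finset.sum_mul_sq_le_sq_mul_sq Sq _ _
        have hsum0 : (0:ℝ) ≤ ∑ P ∈ Sq, (Real.sqrt ((2:ℝ)^P.j) * tn q.1 P) *
            (Real.sqrt ((2:ℝ)^P.j) * tn q.2 P) :=
          Finset.sum_nonneg fun P _ => mul_nonneg
            (mul_nonneg (Real.sqrt_nonneg _) (htn0 _ _))
            (mul_nonneg (Real.sqrt_nonneg _) (htn0 _ _))
        have hS1 : (0:ℝ) ≤ ∑ P ∈ Sq, (Real.sqrt ((2:ℝ)^P.j) * tn q.1 P)^2 :=
          Finset.sum_nonneg fun P _ => sq_nonneg _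
        have hCS : ∑ P ∈ Sq, (Real.sqrt ((2:ℝ)^P.j) * tn q.1 P) *
              (Real.sqrt ((2:ℝ)^P.j) * tn q.2 P) ≤
            Real.sqrt (∑ P ∈ Sq, (Real.sqrt ((2:ℝ)^P.j) * tn q.1 P)^2) *
              Real.sqrt (∑ P ∈ Sq, (Real.sqrt ((2:ℝ)^P.j) * tn q.2 P)^2) := by
          rw [← Real.sqrt_mul hS1]
          calc ∑ P ∈ Sq, (Real.sqrt ((2:ℝ)^P.j) * tn q.1 P) *
                (Real.sqrt ((2:ℝ)^P.j) * tn q.2 P)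
              = Real.sqrt ((∑ P ∈ Sq, (Real.sqrt ((2:ℝ)^P.j) * tn q.1 P) *
                  (Real.sqrt ((2:ℝ)^P.j) * tn q.2 P))^2) := (Real.sqrt_sq hsum0).symm
            _ ≤ Real.sqrt ((∑ P ∈ Sq, (Real.sqrt ((2:ℝ)^P.j) * tn q.1 P)^2) *
                (∑ P ∈ Sq, (Real.sqrt ((2:ℝ)^P.j) * tn q.2 P)^2)) := Real.sqrt_le_sqrt hcs2
        have k1 := key q.1 (fun P hP => (hprop P hP).2.1)
        have k2 := key q.2 (fun P hP => (hprop P hP).2.2)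
        have hmid : ∑ P ∈ Sq, (Real.sqrt ((2:ℝ)^P.j) * tn q.1 P) *
              (Real.sqrt ((2:ℝ)^P.j) * tn q.2 P) ≤
            (Real.sqrt ((2:ℝ)^PT.j) * tS q.1) * (Real.sqrt ((2:ℝ)^PT.j) * tS q.2) :=
          hCS.trans (mul_le_mul k1 k2 (Real.sqrt_nonneg _)
            (mul_nonneg (Real.sqrt_nonneg _) (htS0 _)))
        have hfin : (Real.sqrt ((2:ℝ)^PT.j) * tS q.1) * (Real.sqrt ((2:ℝ)^PT.j) * tS q.2)
            = (2:ℝ)^PT.j * (tS q.1 * tS q.2) := by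
          rw [show (Real.sqrt ((2:ℝ)^PT.j) * tS q.1) * (Real.sqrt ((2:ℝ)^PT.j) * tS q.2)
              = (Real.sqrt ((2:ℝ)^PT.j) * Real.sqrt ((2:ℝ)^PT.j)) * (tS q.1 * tS q.2) by ring,
            Real.mul_self_sqrt h2PT.le]
        calc ∑ P ∈ Sq, (2:ℝ)^P.j * ∏ i, tn i P
            ≤ (∑ P ∈ Sq, (Real.sqrt ((2:ℝ)^P.j) * tn q.1 P) *
                (Real.sqrt ((2:ℝ)^P.j) * tn q.2 P)) * B := hstep1
          _ ≤ ((2:ℝ)^PT.j * (tS q.1 * tS q.2)) * B := by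
              apply mul_le_mul_of_nonneg_right _ hB0
              rw [← hfin]; exact hmid
          _ = (2:ℝ)^PT.j * (tS q.1 * tS q.2 * B) := by ring
          _ ≤ (2:ℝ)^PT.j * G := mul_le_mul_of_nonneg_left (hGp q.1 q.2 hq12) h2PT.le
    refine le_trans (Finset.sum_le_sum
      (fun q (_ : q ∈ (Finset.univ : Finset (Fin n × Fin n))) => hfiber q)) ?_
    rw [Finset.sum_const]
    have hcard : (Finset.univ : Finset (Fin n × Fin n)).card = n * n := by
      simp [Fintype.card_prod]
    rw [hcard, nsmul_eq_mul]

  calc (∑ P ∈ T.filter (fun P => (2:ℝ)^P.j ≤ csmall * (2:ℝ)^PT.j), (2:ℝ)^P.j * ∏ i, tn i P)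
        + ∑ P ∈ T.filter (fun P => ¬((2:ℝ)^P.j ≤ csmall * (2:ℝ)^PT.j)), (2:ℝ)^P.j * ∏ i, tn i P
      ≤ ((n*n : ℕ) : ℝ) * ((2:ℝ)^PT.j * G)
        + (((J+1) * (2^J * m^n) : ℕ) : ℝ) * ((2:ℝ)^PT.j * G) := add_le_add hsmall hbig
    _ = (((J+1) * (2^J * m^n) + n*n : ℕ) : ℝ) * (2:ℝ)^PT.j * G := by push_cast; ring
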